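/- Let G be a connected simple graph on n ≥ 3 vertices. Define v(G) as the minimum cardinality of an independent set A of G such that N_G(A) is a vertex cover of G. Then v(G) ≤ γ_e(G), where γ_e(G) is the edge domination number of G, i.e., the minimum size of a maximal matching of G. -/

import Mathlib

open MvPolynomial

namespace PaperRV

variable {V : Type*}

/-- `A` is an independent set of `G`. -/
def IsIndep (G : SimpleGraph V) (A : Set V) : Prop :=
  ∀ u ∈ A, ∀ v ∈ A, ¬ G.Adj u v

/-- The neighbourhood `N_G(A)` of a set of vertices `A`. -/
def nbhd (G : SimpleGraph V) (A : Set V) : Set V :=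
  {v | ∃ u ∈ A, G.Adj u v}

/-- `C` is a vertex cover of `G`. -/
def IsVertexCover (G : SimpleGraph V) (C : Set V) : Prop :=
  ∀ ⦃u v⦄, G.Adj u v → u ∈ C ∨ v ∈ C

/-- The v-number of (the edge ideal of) `G`: the minimum cardinality of an independent
set `A` such that `N_G(A)` is a vertex cover of `G`. -/
noncomputable def vNumber (G : SimpleGraph V) [Fintype V] : ℕ :=
  sInf {k | ∃ A : Finset V, IsIndep G ↑A ∧ IsVertexCover G (nbhd G ↑A) ∧ A.card = k}

/-- `M` is a matching of `G`: a set of pairwise disjoint edges. -/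
def IsMatching (G : SimpleGraph V) (M : Finset (Sym2 V)) : Prop :=
  (↑M : Set (Sym2 V)) ⊆ G.edgeSet ∧
    ∀ e ∈ M, ∀ f ∈ M, e ≠ f → ∀ v : V, v ∈ e → v ∉ f

/-- `M` is a maximal matching of `G`. -/
def IsMaximalMatching (G : SimpleGraph V) (M : Finset (Sym2 V)) : Prop :=
  IsMatching G M ∧ ∀ M', IsMatching G M' → M ⊆ M' → M' = M

/-- `M` is an induced matching of `G`: the only edges of `G` contained in the union
of the edges of `M` are those of `M`. -/
def IsInducedMatching (G : SimpleGraph V) (M : Finset (Sym2 V)) : Prop :=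
  IsMatching G M ∧ ∀ e ∈ G.edgeSet, (∀ v ∈ e, ∃ f ∈ M, v ∈ f) → e ∈ M

/-- The edge domination number `γ_e(G)`: the minimum size of a maximal matching. -/
noncomputable def edgeDomNum (G : SimpleGraph V) [Fintype V] : ℕ :=
  sInf {k | ∃ M, IsMaximalMatching G M ∧ M.card = k}

/-- From any maximal matching one can extract a suitable independent set. -/
lemma key {V : Type*} [Fintype V] [Nonempty V] (G : SimpleGraph V) (M : Finset (Sym2 V))
    (hM : IsMaximalMatching G M) :
    ∃ A : Finset V, IsIndep G ↑A ∧ IsVertexCover G (nbhd G ↑A) ∧ A.card ≤ M.card := by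
  classical
  obtain ⟨⟨hMsub, hMdisj⟩, hMmax⟩ := hM
  -- S = vertices covered by M
  set S : Finset V := Finset.univ.filter (fun v => ∃ e ∈ M, v ∈ e) with hS
  have hSmem : ∀ v : V, v ∈ S ↔ ∃ e ∈ M, v ∈ e := by
    intro v; simp [hS]
  -- candidates: independent subsets of S
  set cand : Finset (Finset V) := S.powerset.filter (fun A => IsIndep G ↑A) with hcand
  have hne : cand.Nonempty := by
    refine ⟨∅, ?_⟩
    simp only [hcand, Finset.mem_filter, Finset.mem_powerset]
    exact ⟨Finset.empty_subset _, by intro u hu; simp at hu⟩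
  obtain ⟨A, hAcand, hAmax⟩ := cand.exists_max_image Finset.card hne
  simp only [hcand, Finset.mem_filter, Finset.mem_powerset] at hAcand
  obtain ⟨hAS, hAindep⟩ := hAcand
  -- every vertex of S \ A has a neighbour in A
  have hdom : ∀ u ∈ S, u ∉ A → ∃ a ∈ A, G.Adj a u := by
    intro u huS huA
    by_contra h
    push_neg at h
    have hins : insert u A ∈ cand := by
      simp only [hcand, Finset.mem_filter, Finset.mem_powerset]
      constructor
      · exact Finset.insert_subset huS hAS
      · intro x hx y hy
        simp only [Finset.coe_insert, Set.mem_insert_iff] at hx hy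
        rcases hx with rfl | hx <;> rcases hy with rfl | hy
        · exact G.loopless.irrefl _
        · intro hadj; exact h y hy hadj.symm
        · intro hadj; exact h x hx hadj
        · exact hAindep x hx y hy
    have := hAmax _ hins
    have hcard : (insert u A).card = A.card + 1 := Finset.card_insert_of_notMem huA
    omega
  -- every edge of G touches S (maximality of M)
  have htouch : ∀ ⦃u w : V⦄, G.Adj u w → u ∈ S ∨ w ∈ S := by
    intro u w huw
    by_contra h
    push_neg at h
    obtain ⟨hu, hw⟩ := h
    have huS : ∀ e ∈ M, u ∉ e := by
      intro e he hmem; exact hu ((hSmem u).2 ⟨e, he, hmem⟩)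
    have hwS : ∀ e ∈ M, w ∉ e := by
      intro e he hmem; exact hw ((hSmem w).2 ⟨e, he, hmem⟩)
    have hfnot : s(u, w) ∉ M := fun hmem => huS _ hmem (by simp)
    have hmatch : IsMatching G (insert s(u, w) M) := by
      constructor
      · intro e he
        simp only [Finset.coe_insert, Set.mem_insert_iff] at he
        rcases he with rfl | he
        · exact huw
        · exact hMsub he
      · intro e he f hf hef v hv
        simp only [Finset.mem_insert] at he hf
        rcases he with rfl | he <;> rcases hf with rfl | hf
        · exact absurd rfl hef
        · rw [Sym2.mem_iff] at hv
          rcases hv with rfl | rfl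
          · exact huS _ hf
          · exact hwS _ hf
        · intro hvf
          rw [Sym2.mem_iff] at hvf
          rcases hvf with rfl | rfl
          · exact huS _ he hv
          · exact hwS _ he hv
        · exact hMdisj e he f hf hef v hv
    have := hMmax _ hmatch (Finset.subset_insert _ _)
    rw [← this] at hfnot
    exact hfnot (Finset.mem_insert_self _ _)
  refine ⟨A, hAindep, ?_, ?_⟩
  · -- vertex cover
    have main : ∀ ⦃u w : V⦄, G.Adj u w → u ∈ S → u ∈ nbhd G ↑A ∨ w ∈ nbhd G ↑A := by
      intro u w huw huS
      by_cases huA : u ∈ A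
      · exact Or.inr ⟨u, huA, huw⟩
      · obtain ⟨a, haA, ha⟩ := hdom u huS huA
        exact Or.inl ⟨a, haA, ha⟩
    intro u w huw
    rcases htouch huw with huS | hwS
    · exact main huw huS
    · exact (main huw.symm hwS).symm
  · -- cardinality bound
    have hchoose : ∀ a : V, a ∈ A → ∃ e ∈ M, a ∈ e := by
      intro a ha; exact (hSmem a).1 (hAS ha)
    haveI : Nonempty (Sym2 V) := ⟨s(Classical.arbitrary V, Classical.arbitrary V)⟩
    set f : V → Sym2 V := fun a =>
      if h : ∃ e ∈ M, a ∈ e then h.choose else Classical.arbitrary _ with hf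
    have hfmem : ∀ a ∈ A, f a ∈ M ∧ a ∈ f a := by
      intro a ha
      have h := hchoose a ha
      simp only [hf, dif_pos h]
      exact ⟨h.choose_spec.1, h.choose_spec.2⟩
    refine Finset.card_le_card_of_injOn f (fun a ha => (hfmem a ha).1) ?_
    intro a ha b hb hab
    by_contra hne'
    have ha' := (hfmem a (by simpa using ha)).2
    have hb' := (hfmem b (by simpa using hb)).2
    rw [hab] at ha'
    have hedge : f b ∈ G.edgeSet := hMsub (hfmem b (by simpa using hb)).1
    have : f b = s(a, b) := ((Sym2.mem_and_mem_iff hne').1 ⟨ha', hb'⟩)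
    rw [this, SimpleGraph.mem_edgeSet] at hedge
    exact hAindep a (by simpa using ha) b (by simpa using hb) hedge

/-- For a connected graph `G` on `n ≥ 3` vertices, `v(G) ≤ γ_e(G)`. -/
theorem stmt1 {V : Type*} [Fintype V] (G : SimpleGraph V) (hn : 3 ≤ Fintype.card V)
    (hG : G.Connected) :
    vNumber G ≤ edgeDomNum G := by
  classical
  have : 0 < Fintype.card V := by omega
  have hne : Nonempty V := Fintype.card_pos_iff.mp this
  -- a maximal matching exists: take one of maximum cardinality
  have hexists : ∃ M : Finset (Sym2 V), IsMaximalMatching G M := by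
    set cand : Finset (Finset (Sym2 V)) :=
      Finset.univ.filter (fun M => IsMatching G M) with hcand
    have hne' : cand.Nonempty := by
      refine ⟨∅, ?_⟩
      simp only [hcand, Finset.mem_filter, Finset.mem_univ, true_and]
      exact ⟨by simp, by intro e he; simp at he⟩
    obtain ⟨M, hMc, hMmax⟩ := cand.exists_max_image Finset.card hne'
    simp only [hcand, Finset.mem_filter, Finset.mem_univ, true_and] at hMc
    refine ⟨M, hMc, ?_⟩
    intro M' hM' hsub
    have : M'.card ≤ M.card := hMmax M' (by simp [hcand, hM'])
    exact (Finset.eq_of_subset_of_card_le hsub this).symm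
  have hsetne : {k | ∃ M, IsMaximalMatching G M ∧ M.card = k}.Nonempty := by
    obtain ⟨M, hM⟩ := hexists
    exact ⟨M.card, M, hM, rfl⟩
  obtain ⟨M, hM, hMcard⟩ := Nat.sInf_mem hsetne
  obtain ⟨A, hA1, hA2, hA3⟩ := key G M hM
  calc vNumber G ≤ A.card := Nat.sInf_le ⟨A, hA1, hA2, rfl⟩
    _ ≤ M.card := hA3
    _ = edgeDomNum G := hMcard

end PaperRV
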